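/- Consider the Metropolis chain on a finite connected graph G = (X, E) with maximum degree Δ targeting π_β(x) ∝ exp(β H(x)) for a Hamiltonian H : X → ℝ with unique maximizer v*. Suppose there exists a spanning tree T of G rooted at v* such that H(parent(x)) - H(x) ≥ δ for all x ≠ v*, where δ > 0. Then for any β ≥ (log Δ + 2)/δ, the stationary probability of v* satisfies π_β(v*) ≥ 3/4. -/
import Mathlib

private lemma geo_quarter (n : ℕ) : (∑ i ∈ Finset.range n, ((1:ℝ)/4) ^ i) ≤ 4/3 := by
  have h : ((1:ℝ)/4) ≠ 1 := by norm_num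
  rw [geom_sum_eq h]
  have hp : (0:ℝ) ≤ (1/4:ℝ) ^ n := by positivity
  rw [div_le_iff_of_neg (by norm_num : ((1:ℝ)/4) - 1 < 0)]
  nlinarith

/-- Metropolis chain on a finite connected graph `G` with maximum degree `Δ`,
targeting `π_β(x) ∝ exp(β H(x))` with unique maximizer `v*`. If there is a
spanning tree rooted at `v*` (encoded by the parent map `par`) along which `H`
increases by at least `δ > 0` towards the root, then for any
`β ≥ (log Δ + 2)/δ`, the stationary probability of `v*` is at least `3/4`. -/
theorem stmt_10 {X : Type*} [Fintype X] [DecidableEq X] (G : SimpleGraph X)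
    [DecidableRel G.Adj] (hconn : G.Connected)
    (H : X → ℝ) (vstar : X) (par : X → X) (Δ : ℕ) (δ β : ℝ)
    (hΔ : ∀ x, G.degree x ≤ Δ)
    (hmax : ∀ x, x ≠ vstar → H x < H vstar)
    (hadj : ∀ x, x ≠ vstar → G.Adj x (par x))
    (hroot : par vstar = vstar)
    (hreach : ∀ x, ∃ n, par^[n] x = vstar)
    (hδ : 0 < δ)
    (hinc : ∀ x, x ≠ vstar → H (par x) - H x ≥ δ)
    (hβ : β ≥ (Real.log Δ + 2) / δ) :
    Real.exp (β * H vstar) / (∑ y : X, Real.exp (β * H y)) ≥ 3 / 4 := by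
  classical
  -- depth function
  set d : X → ℕ := fun x => Nat.find (hreach x) with hd
  have hdspec : ∀ x, par^[d x] x = vstar := fun x => Nat.find_spec (hreach x)
  have hd0 : ∀ x, d x = 0 → x = vstar := by
    intro x h
    have := hdspec x
    rwa [h, Function.iterate_zero_apply] at this
  have hdpar : ∀ x, x ≠ vstar → d (par x) + 1 = d x := by
    intro x hx
    have h1 : 1 ≤ d x := Nat.one_le_iff_ne_zero.mpr (fun h => hx (hd0 x h))
    have h2 : d (par x) ≤ d x - 1 := by
      apply Nat.find_le
      have := hdspec x
      rwa [show d x = (d x - 1) + 1 by omega, Function.iterate_succ_apply] at this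
    have h3 : d x ≤ d (par x) + 1 := by
      apply Nat.find_le
      rw [Function.iterate_succ_apply]
      exact hdspec (par x)
    omega
  -- H decreases with depth
  have hH : ∀ n x, d x = n → δ * n ≤ H vstar - H x := by
    intro n
    induction n with
    | zero =>
      intro x h
      rw [hd0 x h]
      simp
    | succ k ih =>
      intro x h
      have hx : x ≠ vstar := by
        intro e
        rw [e] at h
        have : vstar = vstar := rfl
        have h0 : d vstar = 0 := Nat.eq_zero_of_le_zero (Nat.find_le (by simp))
        omega
      have hk : d (par x) = k := by have := hdpar x hx; omega
      have h1 := ih (par x) hk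
      have h2 := hinc x hx
      push_cast
      nlinarith
  -- counting: number of vertices at depth i is at most Δ^i
  have hcount : ∀ i : ℕ, (Finset.univ.filter (fun x => d x = i)).card ≤ Δ ^ i := by
    intro i
    induction i with
    | zero =>
      apply le_trans (Finset.card_le_card (t := {vstar}) ?_) (by simp)
      intro x hx
      simp only [Finset.mem_filter] at hx
      simp [hd0 x hx.2]
    | succ k ih =>
      set s := Finset.univ.filter (fun x => d x = k + 1) with hs
      have hmaps : ∀ a ∈ s, par a ∈ Finset.univ.filter (fun x => d x = k) := by
        intro a ha
        simp only [hs, Finset.mem_filter] at ha ⊢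
        have hane : a ≠ vstar := fun e => by
          have h0 : d vstar = 0 := Nat.eq_zero_of_le_zero (Nat.find_le (by simp))
          rw [e, h0] at ha; omega
        have := hdpar a hane
        exact ⟨Finset.mem_univ _, by omega⟩
      have hfib : ∀ b ∈ Finset.univ.filter (fun x => d x = k),
          (s.filter (fun a => par a = b)).card ≤ Δ := by
        intro b _
        refine le_trans (Finset.card_le_card (t := G.neighborFinset b) ?_)
          (by simpa [SimpleGraph.card_neighborFinset_eq_degree] using hΔ b)
        intro a ha
        simp only [Finset.mem_filter, hs] at ha
        have hane : a ≠ vstar := fun e => by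
          have h0 : d vstar = 0 := Nat.eq_zero_of_le_zero (Nat.find_le (by simp))
          rw [e, h0] at ha; omega
        have hadj' := hadj a hane
        rw [ha.2] at hadj'
        simpa [SimpleGraph.mem_neighborFinset] using hadj'.symm
      calc s.card ≤ Δ * (Finset.univ.filter (fun x => d x = k)).card :=
            Finset.card_le_mul_card_image_of_maps_to hmaps Δ hfib
        _ ≤ Δ * Δ ^ k := Nat.mul_le_mul_left _ ih
        _ = Δ ^ (k + 1) := by ring
  -- β δ ≥ log Δ + 2, so Δ * exp(-βδ) ≤ exp(-2) ≤ 1/4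
  have hβδ : Real.log Δ + 2 ≤ β * δ := by
    rw [ge_iff_le, div_le_iff₀ hδ] at hβ
    linarith
  have hlogΔ : 0 ≤ Real.log Δ := by
    rcases Nat.eq_zero_or_pos Δ with h | h
    · simp [h]
    · exact Real.log_nonneg (by exact_mod_cast h)
  set r : ℝ := Real.exp (-(β * δ)) with hr
  have hrpos : 0 < r := Real.exp_pos _
  have hΔr : (Δ : ℝ) * r ≤ Real.exp (-2) := by
    rcases Nat.eq_zero_or_pos Δ with h | h
    · simp [h]; positivity
    · have : (Δ : ℝ) * r = Real.exp (Real.log Δ - β * δ) := by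
        rw [Real.exp_sub, Real.exp_log (by exact_mod_cast h), hr, Real.exp_neg]
        ring
      rw [this]
      exact Real.exp_le_exp.mpr (by linarith)
  have he2 : Real.exp (-2) ≤ 1/4 := by
    have h4 : (4:ℝ) ≤ Real.exp 2 := by
      have h2 : Real.exp 2 = Real.exp 1 * Real.exp 1 := by
        rw [← Real.exp_add]; norm_num
      nlinarith [Real.exp_one_gt_d9]
    have hpos := Real.exp_pos 2
    rw [Real.exp_neg]
    nlinarith [mul_inv_cancel₀ (ne_of_gt hpos), inv_pos.mpr hpos]
  -- bound each term
  have hterm : ∀ y : X, Real.exp (β * H y) ≤ Real.exp (β * H vstar) * r ^ (d y) := by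
    intro y
    have h1 := hH (d y) y rfl
    have hβpos : 0 < β := by
      rw [ge_iff_le, div_le_iff₀ hδ] at hβ
      nlinarith
    have : β * H y ≤ β * H vstar + (d y : ℝ) * (-(β * δ)) := by nlinarith
    calc Real.exp (β * H y) ≤ Real.exp (β * H vstar + (d y : ℝ) * (-(β * δ))) :=
          Real.exp_le_exp.mpr this
      _ = Real.exp (β * H vstar) * r ^ (d y) := by
          rw [Real.exp_add, hr, ← Real.exp_nat_mul]
  -- sum bound
  have hsum : (∑ y : X, Real.exp (β * H y)) ≤ Real.exp (β * H vstar) * (4/3) := by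
    calc (∑ y : X, Real.exp (β * H y))
        ≤ ∑ y : X, Real.exp (β * H vstar) * r ^ (d y) :=
          Finset.sum_le_sum fun y _ => hterm y
      _ = Real.exp (β * H vstar) * ∑ y : X, r ^ (d y) := by
          rw [Finset.mul_sum]
      _ ≤ Real.exp (β * H vstar) * (4/3) := by
          apply mul_le_mul_of_nonneg_left _ (Real.exp_pos _).le
          have hcomp : (∑ y : X, r ^ (d y)) =
              ∑ i ∈ Finset.univ.image d,
                ((Finset.univ.filter (fun x => d x = i)).card : ℝ) * r ^ i := by
            rw [Finset.sum_comp (fun i => r ^ i) d]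
            simp [nsmul_eq_mul]
          rw [hcomp]
          have hsub : Finset.univ.image d ⊆ Finset.range ((Finset.univ.image d).sup id + 1) := by
            intro i hi
            simp only [Finset.mem_range]
            exact Nat.lt_succ_of_le (Finset.le_sup (f := id) hi)
          calc (∑ i ∈ Finset.univ.image d,
                ((Finset.univ.filter (fun x => d x = i)).card : ℝ) * r ^ i)
              ≤ ∑ i ∈ Finset.univ.image d, ((1:ℝ)/4) ^ i := by
                apply Finset.sum_le_sum
                intro i _
                calc ((Finset.univ.filter (fun x => d x = i)).card : ℝ) * r ^ i
                    ≤ (Δ : ℝ) ^ i * r ^ i := by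
                      apply mul_le_mul_of_nonneg_right _ (pow_nonneg hrpos.le _)
                      exact_mod_cast hcount i
                  _ = ((Δ : ℝ) * r) ^ i := by rw [mul_pow]
                  _ ≤ ((1:ℝ)/4) ^ i := by
                      apply pow_le_pow_left₀ (by positivity) (hΔr.trans he2)
            _ ≤ ∑ i ∈ Finset.range ((Finset.univ.image d).sup id + 1), ((1:ℝ)/4) ^ i :=
                Finset.sum_le_sum_of_subset_of_nonneg hsub (fun i _ _ => by positivity)
            _ ≤ 4/3 := geo_quarter _
  -- conclude
  have hpos : 0 < ∑ y : X, Real.exp (β * H y) := by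
    have : Nonempty X := ⟨vstar⟩
    exact Finset.sum_pos (fun y _ => Real.exp_pos _) Finset.univ_nonempty
  rw [ge_iff_le, le_div_iff₀ hpos]
  nlinarith [Real.exp_pos (β * H vstar)]
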